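/- Let C > 0 and N₀ > 0 be real constants and define f(A, B) = C / (B·(A − log₂(N₀·B))) on the set of (A,B) with B > 0 and A > log₂(N₀·B), where log₂ is the base-2 logarithm. At every such point, writing s = A − log₂(N₀·B), the Hessian determinant of f satisfies (∂²f/∂A²)(A,B)·(∂²f/∂B²)(A,B) − ((∂²f/∂A∂B)(A,B))² = C²·(3s − 2/ln 2) / (B⁴·s⁵), and (∂²f/∂A²)(A,B) = 2C/(B·s³) > 0. Consequently, at every point with B > 0 and A − log₂(N₀·B) ≥ 2/(3·ln 2), the 2×2 Hessian matrix of f is positive semidefinite. Here ∂²f/∂A² denotes the second derivative of a ↦ f(a,B) at A, ∂²f/∂B² the second derivative of b ↦ f(A,b) at B, and ∂²f/∂A∂B the derivative in A of the derivative of f in B. -/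

import Mathlib

open Real Filter Topology

private lemma log2_pos : (0:ℝ) < Real.log 2 := Real.log_pos one_lt_two

private lemma hasDeriv_logb (N₀ : ℝ) (hN₀ : 0 < N₀) {b : ℝ} (hb : 0 < b) :
    HasDerivAt (fun x => Real.logb 2 (N₀ * x)) ((Real.log 2)⁻¹ / b) b := by
  have h1 : HasDerivAt (fun x : ℝ => N₀ * x) N₀ b := by
    simpa using (hasDerivAt_id b).const_mul N₀
  have h2 := (Real.hasDerivAt_log (ne_of_gt (mul_pos hN₀ hb))).comp b h1
  have h3 := h2.div_const (Real.log 2)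
  simp only [Function.comp_def] at h3
  have he : (fun x => Real.log (N₀ * x) / Real.log 2) = fun x => Real.logb 2 (N₀ * x) := by
    funext x; rw [Real.logb]
  rw [he] at h3
  refine h3.congr_deriv (Eq.symm ?_)
  have h2ne : Real.log 2 ≠ 0 := (Real.log_pos one_lt_two).ne'
  field_simp

private lemma hasDeriv_fa (C B L : ℝ) (hB : B ≠ 0) {a : ℝ} (ha : a ≠ L) :
    HasDerivAt (fun x => C / (B * (x - L))) (-C / (B * (a - L) ^ 2)) a := by
  have hu : HasDerivAt (fun x => B * (x - L)) B a := by
    simpa using ((hasDerivAt_id a).sub_const L).const_mul B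
  have haL : a - L ≠ 0 := sub_ne_zero.mpr ha
  have hne : B * (a - L) ≠ 0 := mul_ne_zero hB haL
  have h := (hasDerivAt_const a C).div hu hne
  refine h.congr_deriv (Eq.symm ?_)
  rw [zero_mul, zero_sub, mul_pow]
  field_simp

private lemma hasDeriv_fb (C N₀ : ℝ) (hN₀ : 0 < N₀) (a : ℝ) {b : ℝ} (hb : 0 < b)
    (hs : 0 < a - Real.logb 2 (N₀ * b)) :
    HasDerivAt (fun x => C / (x * (a - Real.logb 2 (N₀ * x))))
      (-C * ((a - Real.logb 2 (N₀ * b)) - (Real.log 2)⁻¹) /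
        ((b * (a - Real.logb 2 (N₀ * b))) ^ 2)) b := by
  have hS : HasDerivAt (fun x => a - Real.logb 2 (N₀ * x)) (-((Real.log 2)⁻¹ / b)) b := by
    have := (hasDerivAt_const b a).sub (hasDeriv_logb N₀ hN₀ hb)
    rwa [zero_sub] at this
  have hu : HasDerivAt (fun x => x * (a - Real.logb 2 (N₀ * x)))
      ((a - Real.logb 2 (N₀ * b)) - (Real.log 2)⁻¹) b := by
    have h := (hasDerivAt_id' b).mul hS
    refine h.congr_deriv (Eq.symm ?_)
    field_simp
    all_goals ring
  have hne : b * (a - Real.logb 2 (N₀ * b)) ≠ 0 := mul_ne_zero hb.ne' hs.ne'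
  have h := (hasDerivAt_const b C).div hu hne
  refine h.congr_deriv (Eq.symm ?_)
  rw [zero_mul, zero_sub]
  ring

private lemma posSemidef_fin_two {p q r : ℝ} (hp : 0 < p) (hdet : 0 ≤ p * r - q ^ 2) :
    Matrix.PosSemidef !![p, q; q, r] := by
  refine Matrix.posSemidef_iff_dotProduct_mulVec.mpr ⟨?_, ?_⟩
  · ext i j
    fin_cases i <;> fin_cases j <;>
      simp [Matrix.conjTranspose_apply, Matrix.vecHead, Matrix.vecTail]
  · intro x
    have hx : dotProduct (star x) ((!![p, q; q, r] : Matrix (Fin 2) (Fin 2) ℝ).mulVec x) =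
        p * (x 0) ^ 2 + 2 * q * (x 0) * (x 1) + r * (x 1) ^ 2 := by
      simp [Matrix.mulVec, dotProduct, Fin.sum_univ_two, Matrix.cons_val_zero,
        Matrix.cons_val_one, Matrix.head_cons]
      ring
    rw [hx]
    nlinarith [sq_nonneg (p * x 0 + q * x 1), mul_nonneg hdet (sq_nonneg (x 1)), sq_nonneg (x 1)]

theorem stmt_4 (C N₀ : ℝ) (hC : 0 < C) (hN₀ : 0 < N₀)
    (f : ℝ → ℝ → ℝ)
    (hf : ∀ A B : ℝ, f A B = C / (B * (A - Real.logb 2 (N₀ * B)))) :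
    ∀ A B s : ℝ, 0 < B → Real.logb 2 (N₀ * B) < A → s = A - Real.logb 2 (N₀ * B) →
      ((deriv (deriv (fun a => f a B)) A * deriv (deriv (fun b => f A b)) B -
            (deriv (fun a => deriv (fun b => f a b) B) A) ^ 2 =
          C ^ 2 * (3 * s - 2 / Real.log 2) / (B ^ 4 * s ^ 5)) ∧
        deriv (deriv (fun a => f a B)) A = 2 * C / (B * s ^ 3) ∧
        0 < deriv (deriv (fun a => f a B)) A) ∧
      (2 / (3 * Real.log 2) ≤ s →
        Matrix.PosSemidef
          !![deriv (deriv (fun a => f a B)) A,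
             deriv (fun a => deriv (fun b => f a b) B) A;
             deriv (fun a => deriv (fun b => f a b) B) A,
             deriv (deriv (fun b => f A b)) B]) := by
  intro A B s hB hA hs
  set L := Real.logb 2 (N₀ * B) with hL
  set k := (Real.log 2)⁻¹ with hk
  have hk0 : 0 < k := inv_pos.mpr log2_pos
  have hsp : 0 < s := by rw [hs]; linarith
  have hsne : s ≠ 0 := hsp.ne'
  have hBne : B ≠ 0 := hB.ne'
  have hlog2 : Real.log 2 ≠ 0 := log2_pos.ne'
  -- eventual positivity in A direction
  have hev1 : ∀ᶠ a in 𝓝 A, L < a := eventually_gt_nhds hA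
  -- f in A direction
  have hfB : (fun a => f a B) = fun a => C / (B * (a - L)) := funext fun a => hf a B
  have hd1 : deriv (fun a => f a B) =ᶠ[𝓝 A] fun a => -C / (B * (a - L) ^ 2) := by
    filter_upwards [hev1] with a ha
    rw [hfB]
    exact (hasDeriv_fa C B L hBne (ne_of_gt ha)).deriv
  have key1 : deriv (deriv (fun a => f a B)) A = 2 * C / (B * s ^ 3) := by
    rw [hd1.deriv_eq, hs]
    have hu : HasDerivAt (fun a => B * (a - L) ^ 2) (B * (2 * (A - L))) A := by
      simpa using (((hasDerivAt_id A).sub_const L).pow 2).const_mul B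
    have hne : B * (A - L) ^ 2 ≠ 0 := by
      apply mul_ne_zero hBne
      have : A - L ≠ 0 := sub_ne_zero.mpr (ne_of_gt hA)
      positivity
    have h := ((hasDerivAt_const A (-C)).div hu hne).deriv
    simp only [Pi.div_def] at h
    rw [h]
    have hAL : A - L ≠ 0 := sub_ne_zero.mpr (ne_of_gt hA)
    field_simp
    ring
  -- mixed partial
  have hd2 : (fun a => deriv (fun b => f a b) B) =ᶠ[𝓝 A]
      fun a => -C * ((a - L) - k) / ((B * (a - L)) ^ 2) := by
    filter_upwards [hev1] with a ha
    rw [show (fun b => f a b) = fun y => C / (y * (a - Real.logb 2 (N₀ * y))) from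
      funext fun y => hf a y]
    exact (hasDeriv_fb C N₀ hN₀ a hB (by rw [← hL]; linarith)).deriv
  have key2 : deriv (fun a => deriv (fun b => f a b) B) A
      = C * (s - 2 * k) / (B ^ 2 * s ^ 3) := by
    rw [hd2.deriv_eq, hs]
    have hn : HasDerivAt (fun a => -C * ((a - L) - k)) (-C) A := by
      simpa using (((hasDerivAt_id A).sub_const L).sub_const k).const_mul (-C)
    have hu : HasDerivAt (fun a => (B * (a - L)) ^ 2) (2 * (B * (A - L)) * B) A := by
      have := (((hasDerivAt_id A).sub_const L).const_mul B).pow 2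
      simp only [Pi.pow_def] at this
      refine this.congr_deriv ?_
      simp only [id, Nat.cast_ofNat, Nat.add_one_sub_one, pow_one, mul_one]
    have hAL : A - L ≠ 0 := sub_ne_zero.mpr (ne_of_gt hA)
    have hne : (B * (A - L)) ^ 2 ≠ 0 := by positivity
    have h := (hn.div hu hne).deriv
    simp only [Pi.div_def] at h
    rw [h]
    field_simp
    ring
  -- second B derivative
  have hcont : ContinuousAt (fun x => Real.logb 2 (N₀ * x)) B := by
    rw [show (fun x => Real.logb 2 (N₀ * x)) = fun x => Real.log (N₀ * x) / Real.log 2 from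
      funext fun x => by rw [Real.logb]]
    exact ((Real.continuousAt_log (ne_of_gt (mul_pos hN₀ hB))).comp
      (continuousAt_const.mul continuousAt_id)).div_const _
  have hev2 : ∀ᶠ x in 𝓝 B, 0 < x ∧ Real.logb 2 (N₀ * x) < A :=
    (eventually_gt_nhds hB).and (hcont.eventually (gt_mem_nhds hA))
  have hd3 : deriv (fun b => f A b) =ᶠ[𝓝 B]
      fun x => -C * ((A - Real.logb 2 (N₀ * x)) - k) / ((x * (A - Real.logb 2 (N₀ * x))) ^ 2) := by
    filter_upwards [hev2] with x hx
    rw [show (fun b => f A b) = fun y => C / (y * (A - Real.logb 2 (N₀ * y))) from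
      funext fun y => hf A y]
    exact (hasDeriv_fb C N₀ hN₀ A hx.1 (sub_pos.mpr hx.2)).deriv
  have key3 : deriv (deriv (fun b => f A b)) B
      = C * (k * s + 2 * (s - k) ^ 2) / (B ^ 3 * s ^ 3) := by
    rw [hd3.deriv_eq, hs]
    have hS : HasDerivAt (fun x => A - Real.logb 2 (N₀ * x)) (-(k / B)) B := by
      have := (hasDerivAt_const B A).sub (hasDeriv_logb N₀ hN₀ hB)
      rwa [zero_sub] at this
    have hn : HasDerivAt (fun x => -C * ((A - Real.logb 2 (N₀ * x)) - k)) (-C * (-(k / B))) B :=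
      (hS.sub_const k).const_mul (-C)
    have hu : HasDerivAt (fun x => x * (A - Real.logb 2 (N₀ * x))) ((A - L) - k) B := by
      have h := (hasDerivAt_id' B).mul hS
      refine h.congr_deriv (Eq.symm ?_)
      rw [← hL]
      field_simp
      all_goals ring
    have hden : HasDerivAt (fun x => (x * (A - Real.logb 2 (N₀ * x))) ^ 2)
        (2 * (B * (A - L)) * ((A - L) - k)) B := by
      have h := hu.pow 2
      refine h.congr_deriv (Eq.symm ?_)
      rw [← hL]
      ring
    have hAL : A - L ≠ 0 := sub_ne_zero.mpr (ne_of_gt hA)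
    have hne : (B * (A - Real.logb 2 (N₀ * B))) ^ 2 ≠ 0 := by
      rw [← hL]; positivity
    have h := (hn.div hden hne).deriv
    simp only [Pi.div_def] at h
    rw [h, ← hL]
    field_simp
    ring
  have hdet : deriv (deriv (fun a => f a B)) A * deriv (deriv (fun b => f A b)) B -
      (deriv (fun a => deriv (fun b => f a b) B) A) ^ 2 =
      C ^ 2 * (3 * s - 2 / Real.log 2) / (B ^ 4 * s ^ 5) := by
    rw [key1, key2, key3]
    rw [show (2 : ℝ) / Real.log 2 = 2 * k by rw [hk]; field_simp]
    field_simp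
    ring
  refine ⟨⟨hdet, key1, ?_⟩, ?_⟩
  · rw [key1]; positivity
  · intro hs2
    have hdet0 : 0 ≤ deriv (deriv (fun a => f a B)) A * deriv (deriv (fun b => f A b)) B -
        (deriv (fun a => deriv (fun b => f a b) B) A) ^ 2 := by
      rw [hdet]
      apply div_nonneg
      · have h3 : 2 / Real.log 2 = 3 * (2 / (3 * Real.log 2)) := by
          field_simp
        have h4 : (0:ℝ) ≤ 3 * s - 2 / Real.log 2 := by rw [h3]; linarith
        exact mul_nonneg (sq_nonneg C) h4
      · positivity
    have hp : 0 < deriv (deriv (fun a => f a B)) A := by rw [key1]; positivity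
    exact posSemidef_fin_two hp hdet0
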